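/- arXiv:1701.02101 — 2 statements merged into one kernel-verified Lean document; each statement's English description precedes it below -/
import Mathlib

section
/- Let {g_n} be a sequence of nonnegative functions in L¹(ℝ^N) with sup_n ∫ g_n dx < ∞, and suppose the measures g_n dx converge weakly-* to a finite Borel measure μ on ℝ^N, i.e. ∫ φ g_n dx → ∫ φ dμ for every continuous compactly supported φ : ℝ^N → ℝ. Then the quantity g_∞ := lim_{R→∞} limsup_{n→∞} ∫_{{x : |x|>R}} g_n dx is well defined (the limit in R exists), and limsup_{n→∞} ∫_{ℝ^N} g_n dx = μ(ℝ^N) + g_∞. -/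
open MeasureTheory Filter Topology Metric Real
open scoped ENNReal

noncomputable section

/-- Euclidean space `ℝ^N`. -/
abbrev EN (N : ℕ) := EuclideanSpace ℝ (Fin N)

lemma limsup_tendsto_add {u v : ℕ → ℝ} {a : ℝ}
    (hu : Tendsto u atTop (𝓝 a))
    (hv₁ : IsBoundedUnder (· ≤ ·) atTop v)
    (hv₂ : IsBoundedUnder (· ≥ ·) atTop v) :
    limsup (fun n => u n + v n) atTop = a + limsup v atTop := by
  have hub : IsBoundedUnder (· ≤ ·) atTop u := hu.isBoundedUnder_le
  have hlb : IsBoundedUnder (· ≥ ·) atTop u := hu.isBoundedUnder_ge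
  have hcv : IsCoboundedUnder (· ≤ ·) atTop v := hv₂.isCoboundedUnder_le
  apply le_antisymm
  · have h := limsup_add_le (u := u) (v := v) (f := atTop) hlb hub hcv hv₁
    rw [hu.limsup_eq] at h
    exact h
  · have h := le_limsup_add (u := v) (v := u) (f := atTop) hv₁ hcv hub hlb
    rw [hu.liminf_eq] at h
    have : (v + u) = (fun n => u n + v n) := by funext n; simp [add_comm]
    rw [this] at h
    linarith


/-- Quantified loss of mass at infinity: if nonnegative `g_n ∈ L¹` with
`sup_n ∫ g_n < ∞` and `g_n dx ⇀* μ`, then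
`g_∞ = lim_{R→∞} limsup_n ∫_{|x|>R} g_n` exists and
`limsup_n ∫ g_n = μ(ℝ^N) + g_∞`. -/
theorem mass_at_infinity
    (N : ℕ) (hN : 1 ≤ N)
    (g : ℕ → EN N → ℝ)
    (hg_nonneg : ∀ n, ∀ x : EN N, 0 ≤ g n x)
    (hg_int : ∀ n, Integrable (g n) (volume : Measure (EN N)))
    (hg_bd : ∃ M : ℝ, ∀ n, (∫ x, g n x) ≤ M)
    (μ : Measure (EN N)) [IsFiniteMeasure μ]
    (hconv : ∀ φ : EN N → ℝ, Continuous φ → HasCompactSupport φ →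
      Tendsto (fun n => ∫ x, φ x * g n x) atTop (𝓝 (∫ x, φ x ∂μ))) :
    ∃ gInf : ℝ,
      Tendsto (fun R : ℝ =>
          limsup (fun n => ∫ x in {x : EN N | R < ‖x‖}, g n x) atTop) atTop (𝓝 gInf) ∧
      limsup (fun n => ∫ x, g n x) atTop = (μ Set.univ).toReal + gInf := by
  obtain ⟨M, hM⟩ := hg_bd
  have hSmeas : ∀ R : ℝ, MeasurableSet {x : EN N | R < ‖x‖} := fun R =>
    (isOpen_lt continuous_const continuous_norm).measurableSet
  set A : ℝ → ℕ → ℝ := fun R n => ∫ x in {x : EN N | R < ‖x‖}, g n x with hA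
  have hA_nonneg : ∀ R n, 0 ≤ A R n := fun R n =>
    setIntegral_nonneg (hSmeas R) fun x _ => hg_nonneg n x
  have hA_le : ∀ R n, A R n ≤ M := fun R n =>
    (setIntegral_le_integral (hg_int n) (ae_of_all _ (hg_nonneg n))).trans (hM n)
  set F : ℝ → ℝ := fun R => limsup (A R) atTop with hF
  have hbdA : ∀ R, IsBoundedUnder (· ≤ ·) atTop (A R) := fun R =>
    isBoundedUnder_of ⟨M, fun n => hA_le R n⟩
  have hbdA' : ∀ R, IsBoundedUnder (· ≥ ·) atTop (A R) := fun R =>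
    isBoundedUnder_of ⟨0, fun n => hA_nonneg R n⟩
  have hA_mono : ∀ {R R' : ℝ}, R ≤ R' → ∀ n, A R' n ≤ A R n := by
    intro R R' h n
    exact setIntegral_mono_set ((hg_int n).integrableOn)
      (ae_of_all _ (hg_nonneg n))
      (HasSubset.Subset.eventuallyLE fun x hx => lt_of_le_of_lt h hx)
  have hF_anti : Antitone F := fun R R' h =>
    limsup_le_limsup (Eventually.of_forall (hA_mono h))
      ((hbdA' R').isCoboundedUnder_le) (hbdA R)
  have hF_nonneg : ∀ R, 0 ≤ F R := fun R =>
    le_limsup_of_frequently_le (Frequently.of_forall (hA_nonneg R)) (hbdA R)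
  set gInf : ℝ := ⨅ R, F R with hgInf
  have htend : Tendsto F atTop (𝓝 gInf) := by
    apply tendsto_atTop_ciInf hF_anti
    refine ⟨0, ?_⟩
    rintro y ⟨R, rfl⟩
    exact hF_nonneg R
  -- cutoff functions
  set ψ : ℝ → EN N → ℝ := fun R x => 1 - min 1 (max (‖x‖ - R) 0) with hψdef
  have hψ_cont : ∀ R, Continuous (ψ R) := fun R =>
    continuous_const.sub (continuous_const.min ((continuous_norm.sub continuous_const).max
      continuous_const))
  have hψ_nonneg : ∀ R x, 0 ≤ ψ R x := fun R x => by
    simp only [hψdef, sub_nonneg]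
    exact min_le_left _ _
  have hψ_le1 : ∀ R x, ψ R x ≤ 1 := fun R x => by
    simp only [hψdef]
    have : (0:ℝ) ≤ min 1 (max (‖x‖ - R) 0) := le_min zero_le_one (le_max_right _ _)
    linarith
  have hψ_one : ∀ R (x : EN N), ‖x‖ ≤ R → ψ R x = 1 := fun R x hx => by
    simp only [hψdef]
    rw [max_eq_right (by linarith), min_eq_right zero_le_one, sub_zero]
  have hψ_zero : ∀ R (x : EN N), R + 1 ≤ ‖x‖ → ψ R x = 0 := fun R x hx => by
    simp only [hψdef]
    rw [min_eq_left (le_max_of_le_left (by linarith)), sub_self]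
  have hψ_supp : ∀ R, HasCompactSupport (ψ R) := fun R => by
    apply HasCompactSupport.intro (isCompact_closedBall (0 : EN N) (R + 1))
    intro x hx
    apply hψ_zero
    simp only [mem_closedBall, dist_zero_right, not_le] at hx
    exact hx.le
  -- integrability of cutoff products
  have hψg_int : ∀ R n, Integrable (fun x => ψ R x * g n x) volume := fun R n =>
    (hg_int n).bdd_mul (c := 1) (hψ_cont R).aestronglyMeasurable
      (ae_of_all _ fun x => by rw [Real.norm_eq_abs, abs_of_nonneg (hψ_nonneg R x)]; exact hψ_le1 R x)
  have h1ψ_int : ∀ R n, Integrable (fun x => (1 - ψ R x) * g n x) volume := fun R n =>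
    (hg_int n).bdd_mul (c := 1) (continuous_const.sub (hψ_cont R)).aestronglyMeasurable
      (ae_of_all _ fun x => by
        rw [Real.norm_eq_abs, abs_of_nonneg (by linarith [hψ_le1 R x])]
        linarith [hψ_nonneg R x])
  -- bounds on d R n := ∫ (1-ψ) g
  have hd_nonneg : ∀ R n, 0 ≤ ∫ x, (1 - ψ R x) * g n x := fun R n =>
    integral_nonneg fun x => mul_nonneg (by linarith [hψ_le1 R x]) (hg_nonneg n x)
  have hd_leM : ∀ R n, (∫ x, (1 - ψ R x) * g n x) ≤ M := fun R n => by
    refine (integral_mono (h1ψ_int R n) (hg_int n) fun x => ?_).trans (hM n)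
    have h1 := hψ_nonneg R x
    have h2 := hg_nonneg n x
    nlinarith
  -- key identity
  have key : ∀ R : ℝ, limsup (fun n => ∫ x, g n x) atTop
      = (∫ x, ψ R x ∂μ) + limsup (fun n => ∫ x, (1 - ψ R x) * g n x) atTop := by
    intro R
    have hsplit : ∀ n, (∫ x, g n x)
        = (∫ x, ψ R x * g n x) + ∫ x, (1 - ψ R x) * g n x := by
      intro n
      rw [← integral_add (hψg_int R n) (h1ψ_int R n)]
      congr 1; funext x; ring
    have hc := hconv (ψ R) (hψ_cont R) (hψ_supp R)
    calc limsup (fun n => ∫ x, g n x) atTop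
        = limsup (fun n => (∫ x, ψ R x * g n x) + ∫ x, (1 - ψ R x) * g n x) atTop := by
          congr 1; funext n; exact hsplit n
      _ = (∫ x, ψ R x ∂μ) + limsup (fun n => ∫ x, (1 - ψ R x) * g n x) atTop :=
          limsup_tendsto_add hc (isBoundedUnder_of ⟨M, fun n => hd_leM R n⟩)
            (isBoundedUnder_of ⟨0, fun n => hd_nonneg R n⟩)
  -- sandwich for L R := limsup d
  set L : ℝ → ℝ := fun R => limsup (fun n => ∫ x, (1 - ψ R x) * g n x) atTop with hL
  have hd_le_A : ∀ R n, (∫ x, (1 - ψ R x) * g n x) ≤ A R n := by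
    intro R n
    have h0 : ∀ x ∉ {x : EN N | R < ‖x‖}, (1 - ψ R x) * g n x = 0 := fun x hx => by
      rw [hψ_one R x (not_lt.1 hx)]; ring
    rw [← setIntegral_eq_integral_of_forall_compl_eq_zero h0]
    refine setIntegral_mono_on ((h1ψ_int R n).integrableOn) ((hg_int n).integrableOn)
      (hSmeas R) fun x _ => ?_
    have h1 := hψ_nonneg R x
    have h2 := hg_nonneg n x
    nlinarith
  have hA_le_d : ∀ R n, A (R + 1) n ≤ ∫ x, (1 - ψ R x) * g n x := by
    intro R n
    have heq : A (R + 1) n = ∫ x in {x : EN N | R + 1 < ‖x‖}, (1 - ψ R x) * g n x := by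
      refine setIntegral_congr_fun (hSmeas (R + 1)) fun x hx => ?_
      rw [hψ_zero R x (le_of_lt hx)]; ring
    rw [heq]
    exact setIntegral_le_integral (h1ψ_int R n)
      (ae_of_all _ fun x => mul_nonneg (by linarith [hψ_le1 R x]) (hg_nonneg n x))
  have hFL : ∀ R : ℝ, F (R + 1) ≤ L R ∧ L R ≤ F R := by
    intro R
    constructor
    · exact limsup_le_limsup (Eventually.of_forall (hA_le_d R))
        ((hbdA' (R + 1)).isCoboundedUnder_le)
        (isBoundedUnder_of ⟨M, fun n => hd_leM R n⟩)
    · have hb : IsBoundedUnder (· ≥ ·) atTop (fun n => ∫ x, (1 - ψ R x) * g n x) :=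
        isBoundedUnder_of ⟨0, fun n => hd_nonneg R n⟩
      exact limsup_le_limsup (Eventually.of_forall (hd_le_A R))
        hb.isCoboundedUnder_le (hbdA R)
  refine ⟨gInf, htend, ?_⟩
  -- limit along ℕ
  have hμlim : Tendsto (fun k : ℕ => ∫ x, ψ (k : ℝ) x ∂μ) atTop (𝓝 ((μ Set.univ).toReal)) := by
    have h := tendsto_integral_of_dominated_convergence (μ := μ)
      (F := fun k : ℕ => ψ (k : ℝ)) (f := fun _ => (1:ℝ)) (bound := fun _ => (1:ℝ))
      (fun k => (hψ_cont k).aestronglyMeasurable) (integrable_const 1)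
      (fun k => ae_of_all _ fun x => by
        rw [Real.norm_eq_abs, abs_of_nonneg (hψ_nonneg _ x)]; exact hψ_le1 _ x)
      (ae_of_all _ fun x => by
        refine tendsto_const_nhds.congr' ?_
        filter_upwards [eventually_ge_atTop ⌈‖x‖⌉₊] with k hk
        exact (hψ_one (k : ℝ) x ((Nat.le_ceil ‖x‖).trans (by exact_mod_cast hk))).symm)
    simpa [integral_const, smul_eq_mul, Measure.real] using h
  have hcoe : Tendsto (fun k : ℕ => (k : ℝ)) atTop atTop := tendsto_natCast_atTop_atTop
  have hF1 : Tendsto (fun k : ℕ => F ((k : ℝ) + 1)) atTop (𝓝 gInf) :=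
    htend.comp (tendsto_atTop_add_const_right atTop 1 hcoe)
  have hF0 : Tendsto (fun k : ℕ => F (k : ℝ)) atTop (𝓝 gInf) := htend.comp hcoe
  have hLlim : Tendsto (fun k : ℕ => L (k : ℝ)) atTop (𝓝 gInf) :=
    tendsto_of_tendsto_of_tendsto_of_le_of_le hF1 hF0
      (fun k => (hFL (k : ℝ)).1) (fun k => (hFL (k : ℝ)).2)
  have hsum : Tendsto (fun k : ℕ => (∫ x, ψ (k : ℝ) x ∂μ) + L (k : ℝ)) atTop
      (𝓝 ((μ Set.univ).toReal + gInf)) := hμlim.add hLlim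
  have hconst : Tendsto (fun _ : ℕ => limsup (fun n => ∫ x, g n x) atTop) atTop
      (𝓝 ((μ Set.univ).toReal + gInf)) := by
    refine hsum.congr fun k => ?_
    exact (key (k : ℝ)).symm
  exact (tendsto_nhds_unique hconst tendsto_const_nhds).symm
end
end

section
/- Let f : ℝ → ℝ be continuous with |f(t)| ≤ C₀(|t| + |t|^{2*_α−1}) for all t and some constant C₀ > 0, and let k : ℝ^N → ℝ be measurable and bounded. Let {u_n} be a sequence bounded in L²(ℝ^N) ∩ L^{2*_α}(ℝ^N) with u_n(x) → u₀(x) for almost every x ∈ ℝ^N, where u₀ ∈ L²(ℝ^N) ∩ L^{2*_α}(ℝ^N). Then for every φ ∈ L²(ℝ^N) ∩ L^{2*_α}(ℝ^N): ∫_{ℝ^N} k(x)f(u_n)φ dx → ∫_{ℝ^N} k(x)f(u₀)φ dx as n → ∞. -/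
open MeasureTheory Filter Topology Metric Real
open scoped ENNReal

noncomputable section

lemma key_bound {N : ℕ} (c : ℝ) (hc2 : 2 < c)
    (f : ℝ → ℝ) (C₀ : ℝ) (hC₀ : 0 < C₀)
    (hf_growth : ∀ t, |f t| ≤ C₀ * (|t| + |t| ^ (c-1)))
    (k : EN N → ℝ) (M : ℝ) (hM : ∀ x, |k x| ≤ M)
    (φ : EN N → ℝ) (hφm : AEStronglyMeasurable φ (volume : Measure (EN N)))
    (B : ℝ)
    (v : EN N → ℝ) (hv : AEStronglyMeasurable v (volume : Measure (EN N)))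
    (hv2 : eLpNorm v 2 (volume : Measure (EN N)) ≤ ENNReal.ofReal B)
    (hvc : eLpNorm v (ENNReal.ofReal c) (volume : Measure (EN N)) ≤ ENNReal.ofReal B)
    (s : Set (EN N)) (hs : MeasurableSet s) :
    eLpNorm (s.indicator fun x => k x * f (v x) * φ x) 1 (volume : Measure (EN N)) ≤
      ENNReal.ofReal (M * C₀) *
        (ENNReal.ofReal B * eLpNorm (s.indicator φ) 2 volume +
         ENNReal.ofReal B ^ (c-1) * eLpNorm (s.indicator φ) (ENNReal.ofReal c) volume) := by
  have hM0 : 0 ≤ M := le_trans (abs_nonneg _) (hM 0)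
  have hc0 : (0:ℝ) < c := by linarith
  have hc1 : (0:ℝ) < c - 1 := by linarith
  set ψ : EN N → ℝ := s.indicator φ with hψ
  have hψm : AEStronglyMeasurable ψ (volume : Measure (EN N)) := hφm.indicator hs
  -- measurability of auxiliary functions
  have habs : Continuous fun t : ℝ => |t| ^ (c-1) :=
    continuous_abs.rpow_const (fun _ => Or.inr hc1.le)
  have hvm1 : AEStronglyMeasurable (fun x => |v x|) (volume : Measure (EN N)) := hv.norm
  have hvmc : AEStronglyMeasurable (fun x => |v x| ^ (c-1)) (volume : Measure (EN N)) :=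
    habs.comp_aestronglyMeasurable hv
  -- Step 1: rewrite indicator
  have hind : s.indicator (fun x => k x * f (v x) * φ x)
      = fun x => k x * f (v x) * ψ x := by
    funext x
    by_cases hx : x ∈ s
    · simp [hψ, Set.indicator_of_mem hx]
    · simp [hψ, Set.indicator_of_notMem hx]
  rw [hind]
  -- Step 2: pointwise bound
  have hpt : ∀ x, ‖k x * f (v x) * ψ x‖ ≤
      (M * C₀) • (fun x => |v x| * |ψ x|) x + (M * C₀) • (fun x => |v x| ^ (c-1) * |ψ x|) x := by
    intro x
    have h1 : ‖k x * f (v x) * ψ x‖ = |k x| * |f (v x)| * |ψ x| := by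
      rw [Real.norm_eq_abs, abs_mul, abs_mul]
    rw [h1]
    have h2 : |k x| * |f (v x)| * |ψ x| ≤ M * (C₀ * (|v x| + |v x| ^ (c-1))) * |ψ x| := by
      have h3 : |k x| * |f (v x)| ≤ M * (C₀ * (|v x| + |v x| ^ (c-1))) :=
        mul_le_mul (hM x) (hf_growth (v x)) (abs_nonneg _) hM0
      exact mul_le_mul_of_nonneg_right h3 (abs_nonneg _)
    calc |k x| * |f (v x)| * |ψ x| ≤ M * (C₀ * (|v x| + |v x| ^ (c-1))) * |ψ x| := h2
      _ = (M * C₀) • (fun x => |v x| * |ψ x|) x + (M * C₀) • (fun x => |v x| ^ (c-1) * |ψ x|) x := by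
          simp only [smul_eq_mul]; ring
  have step2 := eLpNorm_mono_real (g := fun x =>
      (M * C₀) • (fun x => |v x| * |ψ x|) x + (M * C₀) • (fun x => |v x| ^ (c-1) * |ψ x|) x)
      (p := 1) (μ := (volume : Measure (EN N))) hpt
  -- Step 3: triangle inequality
  have hA : AEStronglyMeasurable ((M * C₀) • fun x => |v x| * |ψ x|) (volume : Measure (EN N)) :=
    (hvm1.mul hψm.norm).const_smul _
  have hB' : AEStronglyMeasurable ((M * C₀) • fun x => |v x| ^ (c-1) * |ψ x|)
      (volume : Measure (EN N)) := (hvmc.mul hψm.norm).const_smul _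
  have step3 := eLpNorm_add_le hA hB' (le_refl (1 : ℝ≥0∞))
  refine le_trans step2 (le_trans step3 ?_)
  -- Step 4: constants out
  have hnn : ‖M * C₀‖ₑ = ENNReal.ofReal (M * C₀) :=
    Real.enorm_eq_ofReal (by positivity)
  rw [eLpNorm_const_smul, eLpNorm_const_smul, hnn, mul_add]
  refine add_le_add (mul_le_mul_right ?_ _) (mul_le_mul_right ?_ _)
  -- Term 1: Holder with exponents 2, 2
  · have hold1 : eLpNorm (fun x => |v x| * |ψ x|) 1 (volume : Measure (EN N)) ≤
        eLpNorm (fun x => |v x|) 2 volume * eLpNorm (fun x => |ψ x|) 2 volume := by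
      have h := eLpNorm_le_eLpNorm_mul_eLpNorm'_of_norm (p := 2) (q := 2) (r := 1)
        hvm1 hψm.norm (· * ·) 1
        (Eventually.of_forall fun x => by rw [NNReal.coe_one, one_mul]; exact le_of_eq (norm_mul _ _))
      simpa using h
    refine hold1.trans ?_
    have e1 : eLpNorm (fun x => |v x|) 2 (volume : Measure (EN N)) = eLpNorm v 2 volume := by
      simpa [Real.norm_eq_abs] using eLpNorm_norm (p := 2) (μ := (volume : Measure (EN N))) v
    have e2 : eLpNorm (fun x => |ψ x|) 2 (volume : Measure (EN N)) = eLpNorm ψ 2 volume := by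
      simpa [Real.norm_eq_abs] using eLpNorm_norm (p := 2) (μ := (volume : Measure (EN N))) ψ
    rw [e1, e2]
    exact mul_le_mul_left hv2 _
  -- Term 2: Holder with exponents c/(c-1), c
  · have hq : (0:ℝ) < c / (c-1) := by positivity
    have hpqr : (1:ℝ≥0∞)/1 = 1/ENNReal.ofReal (c/(c-1)) + 1/ENNReal.ofReal c := by
      rw [one_div_one, one_div, one_div, ← ENNReal.ofReal_inv_of_pos hq,
        ← ENNReal.ofReal_inv_of_pos hc0, ← ENNReal.ofReal_add (by positivity) (by positivity)]
      rw [show (c/(c-1))⁻¹ + c⁻¹ = 1 by field_simp; ring]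
      exact ENNReal.ofReal_one.symm
    have hold2 : eLpNorm (fun x => |v x| ^ (c-1) * |ψ x|) 1 (volume : Measure (EN N)) ≤
        eLpNorm (fun x => |v x| ^ (c-1)) (ENNReal.ofReal (c/(c-1))) volume *
          eLpNorm (fun x => |ψ x|) (ENNReal.ofReal c) volume := by
      haveI : ENNReal.HolderTriple (ENNReal.ofReal (c/(c-1))) (ENNReal.ofReal c) 1 :=
        ⟨by rw [inv_one]; simpa only [one_div, inv_one] using hpqr.symm⟩
      have h := eLpNorm_le_eLpNorm_mul_eLpNorm'_of_norm (p := ENNReal.ofReal (c/(c-1)))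
        (q := ENNReal.ofReal c) (r := 1)
        hvmc hψm.norm (· * ·) 1
        (Eventually.of_forall fun x => by rw [NNReal.coe_one, one_mul]; exact le_of_eq (norm_mul _ _))
      simpa using h
    refine hold2.trans ?_
    have e2 : eLpNorm (fun x => |ψ x|) (ENNReal.ofReal c) (volume : Measure (EN N))
        = eLpNorm ψ (ENNReal.ofReal c) volume := by
      simpa [Real.norm_eq_abs] using
        eLpNorm_norm (p := ENNReal.ofReal c) (μ := (volume : Measure (EN N))) ψ
    rw [e2]
    have e1 : eLpNorm (fun x => |v x| ^ (c-1)) (ENNReal.ofReal (c/(c-1)))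
          (volume : Measure (EN N))
        = eLpNorm v (ENNReal.ofReal c) volume ^ (c-1) := by
      have := eLpNorm_norm_rpow (p := ENNReal.ofReal (c/(c-1)))
        (μ := (volume : Measure (EN N))) v hc1
      simp only [Real.norm_eq_abs] at this
      rw [this]
      congr 1
      rw [← ENNReal.ofReal_mul hq.le]
      congr 1
      field_simp
    rw [e1]
    exact mul_le_mul_left (ENNReal.rpow_le_rpow hvc hc1.le) _

/-- The critical fractional Sobolev exponent `2*_α = 2N/(N-2α)`. -/
def critExp (N : ℕ) (α : ℝ) : ℝ := 2 * N / (N - 2 * α)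

/-- Convergence of `∫ k f(u_n) φ` to `∫ k f(u₀) φ` for sequences bounded in
`L² ∩ L^{2*_α}` converging a.e. -/
theorem convergence_nonlinear_term
    (N : ℕ) (hN : 2 ≤ N) (α : ℝ) (hα : α ∈ Set.Ioo (0:ℝ) 1)
    (f : ℝ → ℝ) (hf_cont : Continuous f)
    (C₀ : ℝ) (hC₀ : 0 < C₀)
    (hf_growth : ∀ t : ℝ, |f t| ≤ C₀ * (|t| + |t| ^ (critExp N α - 1)))
    (k : EN N → ℝ) (hk_meas : Measurable k) (hk_bd : ∃ M : ℝ, ∀ x : EN N, |k x| ≤ M)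
    (u : ℕ → EN N → ℝ) (u₀ : EN N → ℝ)
    (hu_L2 : ∀ n, MemLp (u n) 2 (volume : Measure (EN N)))
    (hu_Lc : ∀ n, MemLp (u n) (ENNReal.ofReal (critExp N α)) (volume : Measure (EN N)))
    (hu_bd : ∃ M : ℝ, ∀ n,
      eLpNorm (u n) 2 (volume : Measure (EN N)) ≤ ENNReal.ofReal M ∧
      eLpNorm (u n) (ENNReal.ofReal (critExp N α)) (volume : Measure (EN N)) ≤ ENNReal.ofReal M)
    (hu_ae : ∀ᵐ x : EN N, Tendsto (fun n => u n x) atTop (𝓝 (u₀ x)))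
    (hu₀_L2 : MemLp u₀ 2 (volume : Measure (EN N)))
    (hu₀_Lc : MemLp u₀ (ENNReal.ofReal (critExp N α)) (volume : Measure (EN N)))
    (φ : EN N → ℝ)
    (hφ_L2 : MemLp φ 2 (volume : Measure (EN N)))
    (hφ_Lc : MemLp φ (ENNReal.ofReal (critExp N α)) (volume : Measure (EN N))) :
    Tendsto (fun n => ∫ x, k x * f (u n x) * φ x) atTop
      (𝓝 (∫ x, k x * f (u₀ x) * φ x)) := by
  obtain ⟨hα0, hα1⟩ := hα
  have hN2 : (2:ℝ) ≤ (N:ℝ) := by exact_mod_cast hN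
  have hden : (0:ℝ) < (N:ℝ) - 2*α := by linarith
  have hc2 : 2 < critExp N α := by
    rw [critExp, lt_div_iff₀ hden]; nlinarith
  set c := critExp N α with hcdef
  set pc := ENNReal.ofReal c with hpc
  have hc0 : (0:ℝ) < c := by linarith
  have hc1 : (0:ℝ) < c - 1 := by linarith
  have hpc_one : (1:ℝ≥0∞) ≤ pc := by
    rw [hpc, show (1:ℝ≥0∞) = ENNReal.ofReal 1 from ENNReal.ofReal_one.symm]
    exact ENNReal.ofReal_le_ofReal (by linarith)
  have hpc_top : pc ≠ ∞ := ENNReal.ofReal_ne_top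
  obtain ⟨M, hM⟩ := hk_bd
  have hM0 : 0 ≤ M := le_trans (abs_nonneg _) (hM 0)
  obtain ⟨Mu, hMu⟩ := hu_bd
  set B : ℝ := max Mu (max (eLpNorm u₀ 2 volume).toReal (eLpNorm u₀ pc volume).toReal) with hBdef
  have hB0 : 0 ≤ B :=
    le_trans (le_trans ENNReal.toReal_nonneg (le_max_left _ _)) (le_max_right _ _)
  have hu2B : ∀ n, eLpNorm (u n) 2 volume ≤ ENNReal.ofReal B :=
    fun n => ((hMu n).1).trans (ENNReal.ofReal_le_ofReal (le_max_left _ _))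
  have hucB : ∀ n, eLpNorm (u n) pc volume ≤ ENNReal.ofReal B :=
    fun n => ((hMu n).2).trans (ENNReal.ofReal_le_ofReal (le_max_left _ _))
  have h02B : eLpNorm u₀ 2 volume ≤ ENNReal.ofReal B := by
    rw [← ENNReal.ofReal_toReal hu₀_L2.2.ne]
    exact ENNReal.ofReal_le_ofReal
      (le_trans (le_trans (le_max_left _ _) (le_max_right _ _)) le_rfl)
  have h0cB : eLpNorm u₀ pc volume ≤ ENNReal.ofReal B := by
    rw [← ENNReal.ofReal_toReal hu₀_Lc.2.ne]
    exact ENNReal.ofReal_le_ofReal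
      (le_trans (le_trans (le_max_right _ _) (le_max_right _ _)) le_rfl)
  have hφm : AEStronglyMeasurable φ (volume : Measure (EN N)) := hφ_L2.aestronglyMeasurable
  -- measurability of integrands
  have hgm : ∀ (v : EN N → ℝ), AEStronglyMeasurable v (volume : Measure (EN N)) →
      AEStronglyMeasurable (fun x => k x * f (v x) * φ x) (volume : Measure (EN N)) :=
    fun v hv => (hk_meas.aestronglyMeasurable.mul
      (hf_cont.comp_aestronglyMeasurable hv)).mul hφm
  -- the key uniform bound (from key_bound)
  have key : ∀ (v : EN N → ℝ), AEStronglyMeasurable v (volume : Measure (EN N)) →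
      eLpNorm v 2 (volume : Measure (EN N)) ≤ ENNReal.ofReal B →
      eLpNorm v pc (volume : Measure (EN N)) ≤ ENNReal.ofReal B →
      ∀ s : Set (EN N), MeasurableSet s →
      eLpNorm (s.indicator fun x => k x * f (v x) * φ x) 1 (volume : Measure (EN N)) ≤
        ENNReal.ofReal (M * C₀) *
          (ENNReal.ofReal B * eLpNorm (s.indicator φ) 2 volume +
           ENNReal.ofReal B ^ (c-1) * eLpNorm (s.indicator φ) pc volume) :=
    fun v hv hv2 hvc s hs =>
      key_bound c hc2 f C₀ hC₀ hf_growth k M hM φ hφm B v hv hv2 hvc s hs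
  -- membership in L¹
  have hmem : ∀ (v : EN N → ℝ), AEStronglyMeasurable v (volume : Measure (EN N)) →
      eLpNorm v 2 (volume : Measure (EN N)) ≤ ENNReal.ofReal B →
      eLpNorm v pc (volume : Measure (EN N)) ≤ ENNReal.ofReal B →
      MemLp (fun x => k x * f (v x) * φ x) 1 (volume : Measure (EN N)) := by
    intro v hv hv2 hvc
    refine ⟨hgm v hv, ?_⟩
    have h := key v hv hv2 hvc Set.univ MeasurableSet.univ
    rw [Set.indicator_univ, Set.indicator_univ] at h
    refine lt_of_le_of_lt h ?_
    refine ENNReal.mul_lt_top ENNReal.ofReal_lt_top ?_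
    refine ENNReal.add_lt_top.mpr ⟨?_, ?_⟩
    · exact ENNReal.mul_lt_top ENNReal.ofReal_lt_top hφ_L2.2
    · exact ENNReal.mul_lt_top
        (ENNReal.rpow_lt_top_of_nonneg hc1.le ENNReal.ofReal_ne_top) hφ_Lc.2
  -- the constant used for smallness arguments
  set K : ℝ := (M * C₀) * (B + B ^ (c-1)) + 1 with hKdef
  have hK1 : 1 ≤ K := by
    have : 0 ≤ (M * C₀) * (B + B ^ (c-1)) := by positivity
    linarith
  have hK0 : 0 < K := by linarith
  -- the main smallness computation
  have hcalc : ∀ (ε : ℝ), 0 < ε → ∀ X Y : ℝ≥0∞,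
      X ≤ ENNReal.ofReal (ε / K) → Y ≤ ENNReal.ofReal (ε / K) →
      ENNReal.ofReal (M * C₀) *
        (ENNReal.ofReal B * X + ENNReal.ofReal B ^ (c-1) * Y) ≤ ENNReal.ofReal ε := by
    intro ε hε X Y hX hY
    have hη0 : 0 ≤ ε / K := by positivity
    calc ENNReal.ofReal (M * C₀) *
        (ENNReal.ofReal B * X + ENNReal.ofReal B ^ (c-1) * Y)
        ≤ ENNReal.ofReal (M * C₀) *
          (ENNReal.ofReal B * ENNReal.ofReal (ε / K) +
            ENNReal.ofReal B ^ (c-1) * ENNReal.ofReal (ε / K)) := by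
          exact mul_le_mul_right (add_le_add (mul_le_mul_right hX _)
            (mul_le_mul_right hY _)) _
      _ = ENNReal.ofReal ((M * C₀) * (B * (ε / K) + B ^ (c-1) * (ε / K))) := by
          rw [ENNReal.ofReal_rpow_of_nonneg hB0 hc1.le,
            ← ENNReal.ofReal_mul hB0, ← ENNReal.ofReal_mul (by positivity),
            ← ENNReal.ofReal_add (by positivity) (by positivity),
            ← ENNReal.ofReal_mul (by positivity)]
      _ ≤ ENNReal.ofReal ε := by
          refine ENNReal.ofReal_le_ofReal ?_
          have h1 : (M * C₀) * (B * (ε / K) + B ^ (c-1) * (ε / K))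
              = ((M * C₀) * (B + B ^ (c-1))) * (ε / K) := by ring
          rw [h1]
          calc ((M * C₀) * (B + B ^ (c-1))) * (ε / K) ≤ K * (ε / K) := by
                refine mul_le_mul_of_nonneg_right ?_ hη0
                rw [hKdef]; linarith
            _ = ε := by field_simp
  -- uniform integrability
  have hui : UnifIntegrable (fun n => fun x => k x * f (u n x) * φ x) 1
      (volume : Measure (EN N)) := by
    intro ε hε
    have hη : 0 < ε / K := by positivity
    obtain ⟨δ₂, hδ₂pos, hδ₂⟩ := hφ_L2.eLpNorm_indicator_le one_le_two ENNReal.ofNat_ne_top hη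
    obtain ⟨δc, hδcpos, hδc⟩ := hφ_Lc.eLpNorm_indicator_le hpc_one hpc_top hη
    refine ⟨min δ₂ δc, lt_min hδ₂pos hδcpos, fun n s hs hμs => ?_⟩
    have h2 := hδ₂ s hs (hμs.trans (ENNReal.ofReal_le_ofReal (min_le_left _ _)))
    have hcφ := hδc s hs (hμs.trans (ENNReal.ofReal_le_ofReal (min_le_right _ _)))
    exact le_trans (key (u n) (hu_L2 n).aestronglyMeasurable (hu2B n) (hucB n) s hs)
      (hcalc ε hε _ _ h2 hcφ)
  -- uniform tightness
  have hut : UnifTight (fun n => fun x => k x * f (u n x) * φ x) 1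
      (volume : Measure (EN N)) := by
    rw [unifTight_iff_real]
    intro ε hε
    have hη : 0 < ε / K := by positivity
    have hη' : ENNReal.ofReal (ε / K) ≠ 0 := (ENNReal.ofReal_pos.mpr hη).ne'
    obtain ⟨s₂, hs₂m, hs₂fin, h₂⟩ :=
      hφ_L2.exists_eLpNorm_indicator_compl_lt ENNReal.ofNat_ne_top hη'
    obtain ⟨sc, hscm, hscfin, hcφ⟩ :=
      hφ_Lc.exists_eLpNorm_indicator_compl_lt hpc_top hη'
    refine ⟨s₂ ∪ sc, ?_, fun n => ?_⟩
    · exact ((measure_union_le s₂ sc).trans_lt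
        (ENNReal.add_lt_top.mpr ⟨hs₂fin, hscfin⟩)).ne
    have hind2 : (s₂ ∪ sc)ᶜ.indicator φ = scᶜ.indicator (s₂ᶜ.indicator φ) := by
      rw [Set.indicator_indicator, Set.compl_union, Set.inter_comm]
    have hindc : (s₂ ∪ sc)ᶜ.indicator φ = s₂ᶜ.indicator (scᶜ.indicator φ) := by
      rw [Set.indicator_indicator, Set.compl_union]
    have hb2 : eLpNorm ((s₂ ∪ sc)ᶜ.indicator φ) 2 volume ≤ ENNReal.ofReal (ε / K) := by
      rw [hind2]; exact (eLpNorm_indicator_le _).trans h₂.le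
    have hbc : eLpNorm ((s₂ ∪ sc)ᶜ.indicator φ) pc volume ≤ ENNReal.ofReal (ε / K) := by
      rw [hindc]; exact (eLpNorm_indicator_le _).trans hcφ.le
    exact le_trans (key (u n) (hu_L2 n).aestronglyMeasurable (hu2B n) (hucB n)
      (s₂ ∪ sc)ᶜ (hs₂m.union hscm).compl) (hcalc ε hε _ _ hb2 hbc)
  -- a.e. convergence of the integrands
  have hae : ∀ᵐ x : EN N, Tendsto (fun n => k x * f (u n x) * φ x) atTop
      (𝓝 (k x * f (u₀ x) * φ x)) := by
    filter_upwards [hu_ae] with x hx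
    exact (((hf_cont.tendsto (u₀ x)).comp hx).const_mul (k x)).mul_const (φ x)
  -- Vitali convergence theorem
  have hg₀mem : MemLp (fun x => k x * f (u₀ x) * φ x) 1 (volume : Measure (EN N)) :=
    hmem u₀ hu₀_L2.aestronglyMeasurable h02B h0cB
  have hL1 : Tendsto (fun n => eLpNorm ((fun x => k x * f (u n x) * φ x) -
      fun x => k x * f (u₀ x) * φ x) 1 (volume : Measure (EN N))) atTop (𝓝 0) :=
    tendsto_Lp_of_tendsto_ae le_rfl ENNReal.one_ne_top
      (fun n => hgm (u n) (hu_L2 n).aestronglyMeasurable) hg₀mem hui hut hae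
  exact tendsto_integral_of_L1' (fun x => k x * f (u₀ x) * φ x)
    (memLp_one_iff_integrable.mp hg₀mem).aestronglyMeasurable
    (Eventually.of_forall fun n => memLp_one_iff_integrable.mp
      (hmem (u n) (hu_L2 n).aestronglyMeasurable (hu2B n) (hucB n)))
    hL1
end
end
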